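/- Let φ : [a,∞) → ℝ. Define a sequence by x_0 = N ≥ max(a, e) and x_{n+1} = x_n + c · x_n/(log x_n)^C · T^{-ν}, where c > 0, C ≥ 0, T ≥ 1, ν ≥ 0. Let n(T) be the least n with x_n ≥ φ(T) (assuming φ(T) ≥ x_0). Then n(T) ≤ T^ν (log φ(T))^{C+1} / (log 2 · min(1, c)) + 1. -/

import Mathlib

lemma log_one_add_ge (u : ℝ) (hu : 0 ≤ u) :
    Real.log 2 * min 1 u ≤ Real.log (1 + u) := by
  rcases le_or_gt 1 u with h | h
  · rw [min_eq_left h, mul_one]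
    exact Real.log_le_log (by norm_num) (by linarith)
  · rw [min_eq_right h.le]
    rcases eq_or_lt_of_le hu with h0 | h0
    · simp [← h0]
    · have hp : (1:ℝ) ≤ 1 / u := (one_le_div h0).2 h.le
      have hb := one_add_mul_self_le_rpow_one_add (by linarith : (-1:ℝ) ≤ u) hp
      rw [one_div_mul_cancel h0.ne'] at hb
      have hlog := Real.log_le_log (by norm_num) hb
      rw [Real.log_rpow (by linarith)] at hlog
      rw [show (1:ℝ)+1 = 2 by norm_num] at hlog
      have : Real.log 2 * u ≤ (1 / u * Real.log (1 + u)) * u :=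
        mul_le_mul_of_nonneg_right hlog hu
      calc Real.log 2 * u ≤ (1 / u * Real.log (1 + u)) * u := this
        _ = Real.log (1 + u) := by field_simp

/-- Let `x_0 = N ≥ max(a, e)` and `x_{n+1} = x_n + c x_n/(log x_n)^C · T^{-ν}`,
with `c > 0`, `C ≥ 0`, `T ≥ 1`, `ν ≥ 0`.  If `n(T)` is the least `n` with
`x_n ≥ φ(T)` (and `φ(T) ≥ x_0`), then
`n(T) ≤ T^ν (log φ(T))^{C+1} / (log 2 · min 1 c) + 1`. -/
theorem nT_le (a c C T ν N φT : ℝ) (hc : 0 < c) (hC : 0 ≤ C) (hT : 1 ≤ T) (hν : 0 ≤ ν)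
    (hN : max a (Real.exp 1) ≤ N)
    (x : ℕ → ℝ) (hx0 : x 0 = N)
    (hrec : ∀ n, x (n + 1) = x n + c * x n / Real.log (x n) ^ C * T ^ (-ν))
    (hφ : x 0 ≤ φT)
    (nT : ℕ) (hnT : φT ≤ x nT) (hleast : ∀ m < nT, x m < φT) :
    (nT : ℝ) ≤ T ^ ν * Real.log φT ^ (C + 1) / (Real.log 2 * min 1 c) + 1 := by
  have he : Real.exp 1 ≤ N := le_trans (le_max_right _ _) hN
  have hT0 : (0:ℝ) < T := by linarith
  have hTpos : 0 < T ^ (-ν) := Real.rpow_pos_of_pos hT0 _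
  have hxe : ∀ n, Real.exp 1 ≤ x n := by
    intro n
    induction n with
    | zero => rw [hx0]; exact he
    | succ n ih =>
      have hxpos : 0 < x n := lt_of_lt_of_le (Real.exp_pos 1) ih
      have hlog : 1 ≤ Real.log (x n) := by
        have := Real.log_le_log (Real.exp_pos 1) ih
        rwa [Real.log_exp] at this
      have hlogC : 0 < Real.log (x n) ^ C := Real.rpow_pos_of_pos (by linarith) C
      have hnn : 0 ≤ c * x n / Real.log (x n) ^ C * T ^ (-ν) := by positivity
      rw [hrec n]; linarith
  have hxpos : ∀ n, 0 < x n := fun n => lt_of_lt_of_le (Real.exp_pos 1) (hxe n)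
  have hlog1 : ∀ n, 1 ≤ Real.log (x n) := by
    intro n
    have := Real.log_le_log (Real.exp_pos 1) (hxe n)
    rwa [Real.log_exp] at this
  have hφe : Real.exp 1 ≤ φT := le_trans (hxe 0) hφ
  have hφ1 : 1 ≤ Real.log φT := by
    have := Real.log_le_log (Real.exp_pos 1) hφe
    rwa [Real.log_exp] at this
  have hφC : 0 < Real.log φT ^ C := Real.rpow_pos_of_pos (by linarith) C
  have hφC1 : 1 ≤ Real.log φT ^ C := by
    have := Real.rpow_le_rpow (by norm_num : (0:ℝ) ≤ 1) hφ1 hC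
    rwa [Real.one_rpow] at this
  have hl2 : 0 < Real.log 2 := Real.log_pos (by norm_num)
  have hmin : 0 < min 1 c := lt_min one_pos hc
  have hTν : 0 < T ^ ν := Real.rpow_pos_of_pos hT0 _
  have hrhs0 : 0 ≤ T ^ ν * Real.log φT ^ (C + 1) / (Real.log 2 * min 1 c) := by
    apply div_nonneg (mul_nonneg hTν.le (Real.rpow_nonneg (by linarith) _))
    exact mul_nonneg hl2.le hmin.le
  rcases Nat.eq_zero_or_pos nT with h0 | hpos
  · rw [h0]; push_cast; linarith
  -- the step quantity
  set t : ℝ := T ^ (-ν) / Real.log φT ^ C with ht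
  have ht0 : 0 < t := div_pos hTpos hφC
  have hT1 : T ^ (-ν) ≤ 1 :=
    Real.rpow_le_one_of_one_le_of_nonpos hT (neg_nonpos.2 hν)
  have ht1 : t ≤ 1 := le_trans (by
      rw [ht, div_le_iff₀ hφC]; nlinarith) le_rfl
  set δ : ℝ := Real.log 2 * min 1 c * t with hδ
  have hδ0 : 0 < δ := by positivity
  have hstep : ∀ n, n < nT → Real.log (x n) + δ ≤ Real.log (x (n + 1)) := by
    intro n hn
    have hln : 1 ≤ Real.log (x n) := hlog1 n
    have hlnC : 0 < Real.log (x n) ^ C := Real.rpow_pos_of_pos (by linarith) C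
    set u : ℝ := c / Real.log (x n) ^ C * T ^ (-ν) with hu
    have hu0 : 0 < u := by positivity
    have hxeq : x (n + 1) = x n * (1 + u) := by
      rw [hrec n, hu]; field_simp
    have hlogsum : Real.log (x (n + 1)) = Real.log (x n) + Real.log (1 + u) := by
      rw [hxeq, Real.log_mul (ne_of_gt (hxpos n)) (by linarith)]
    -- x n < φT so log (x n) ≤ log φT
    have hxn : Real.log (x n) ≤ Real.log φT :=
      Real.log_le_log (hxpos n) (hleast n hn).le
    have hCle : Real.log (x n) ^ C ≤ Real.log φT ^ C :=
      Real.rpow_le_rpow (by linarith) hxn hC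
    have hct : c * t ≤ u := by
      rw [hu, ht, div_mul_eq_mul_div, ← mul_div_assoc]
      gcongr

    have hmt : min 1 c * t ≤ min 1 u := by
      apply le_min
      · nlinarith [min_le_left 1 c]
      · calc min 1 c * t ≤ c * t := mul_le_mul_of_nonneg_right (min_le_right 1 c) ht0.le
          _ ≤ u := hct
    have hkey := log_one_add_ge u hu0.le
    have : δ ≤ Real.log (1 + u) := by
      rw [hδ, mul_assoc]
      calc Real.log 2 * (min 1 c * t) ≤ Real.log 2 * min 1 u :=
            mul_le_mul_of_nonneg_left hmt hl2.le
        _ ≤ Real.log (1 + u) := hkey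
    linarith [hlogsum.ge, hlogsum.le, this]
  have hsum : ∀ m, m ≤ nT → Real.log (x 0) + m * δ ≤ Real.log (x m) := by
    intro m
    induction m with
    | zero => intro _; simp
    | succ m ih =>
      intro h
      have hm : m < nT := Nat.lt_of_succ_le h
      have h1 := ih hm.le
      have h2 := hstep m hm
      push_cast
      push_cast at h1
      linarith
  -- apply at m = nT - 1
  have hlt : x (nT - 1) < φT := hleast _ (Nat.sub_lt hpos one_pos)
  have hle : Real.log (x (nT - 1)) ≤ Real.log φT :=
    Real.log_le_log (hxpos _) hlt.le
  have hsum1 := hsum (nT - 1) (Nat.sub_le _ _)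
  have hcast : ((nT - 1 : ℕ) : ℝ) = (nT : ℝ) - 1 := by
    rw [Nat.cast_sub hpos]; norm_num
  rw [hcast] at hsum1
  have hlogN : 0 ≤ Real.log (x 0) := by linarith [hlog1 0]
  have hmain : ((nT : ℝ) - 1) * δ ≤ Real.log φT := by linarith
  have hdiv : (nT : ℝ) - 1 ≤ Real.log φT / δ := (le_div_iff₀ hδ0).2 hmain
  have hrw : Real.log φT / δ = T ^ ν * Real.log φT ^ (C + 1) / (Real.log 2 * min 1 c) := by
    rw [hδ, ht, Real.rpow_add_one (by positivity : Real.log φT ≠ 0),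
      Real.rpow_neg hT0.le]
    field_simp
  rw [hrw] at hdiv
  linarith
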